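/- Let A be an m-by-n random matrix whose entries a_{ij} are i.i.d. from a symmetric distribution with zero mean (and with P(A = 0) = 0 so that A/||A||_2 is well defined). Then for every i, j, the variance of a_{ij}/||A||_2 is at most 1/max(m, n), where ||A||_2 denotes the spectral norm (largest singular value) of A. -/

import Mathlib

open MeasureTheory ProbabilityTheory Matrix RealInnerProductSpace
set_option maxHeartbeats 2000000

/-- The spectral norm (largest singular value) of a real matrix. -/
noncomputable def spectralNorm' {m n : ℕ} (A : Matrix (Fin m) (Fin n) ℝ) : ℝ :=
  ‖LinearMap.toContinuousLinearMap (Matrix.toEuclideanLin A)‖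


lemma sn_nonneg {m n : ℕ} (M : Matrix (Fin m) (Fin n) ℝ) : 0 ≤ spectralNorm' M :=
  norm_nonneg _

lemma eucl_norm_sq {k : ℕ} (x : EuclideanSpace ℝ (Fin k)) : ‖x‖ ^ 2 = ∑ a, x a ^ 2 := by
  rw [EuclideanSpace.norm_eq, Real.sq_sqrt (by positivity)]
  simp [sq_abs]

lemma eucl_coord_le {k : ℕ} (x : EuclideanSpace ℝ (Fin k)) (a : Fin k) : |x a| ≤ ‖x‖ := by
  have h : x a ^ 2 ≤ ‖x‖ ^ 2 := by
    rw [eucl_norm_sq]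
    exact Finset.single_le_sum (f := fun b => x b ^ 2) (fun b _ => sq_nonneg _)
      (Finset.mem_univ a)
  nlinarith [norm_nonneg x, abs_nonneg (x a), sq_abs (x a)]

lemma sn_apply_le {m n : ℕ} (M : Matrix (Fin m) (Fin n) ℝ) (v : EuclideanSpace ℝ (Fin n)) :
    ‖Matrix.toEuclideanLin M v‖ ≤ spectralNorm' M * ‖v‖ := by
  have := (LinearMap.toContinuousLinearMap (Matrix.toEuclideanLin M)).le_opNorm v
  simpa [spectralNorm'] using this

lemma sn_le_bound {m n : ℕ} (M : Matrix (Fin m) (Fin n) ℝ) {C : ℝ} (hC : 0 ≤ C)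
    (h : ∀ v : EuclideanSpace ℝ (Fin n), ‖Matrix.toEuclideanLin M v‖ ≤ C * ‖v‖) :
    spectralNorm' M ≤ C := by
  apply ContinuousLinearMap.opNorm_le_bound _ hC
  intro v; simpa using h v

lemma toEL_apply {m n : ℕ} (M : Matrix (Fin m) (Fin n) ℝ) (v : EuclideanSpace ℝ (Fin n))
    (k : Fin m) : (Matrix.toEuclideanLin M v) k = ∑ l, M k l * v l := by
  rw [Matrix.toEuclideanLin_apply]
  rfl

lemma entry_abs_le {m n : ℕ} (M : Matrix (Fin m) (Fin n) ℝ) (k : Fin m) (l : Fin n) :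
    |M k l| ≤ spectralNorm' M := by
  have h1 : ‖Matrix.toEuclideanLin M (EuclideanSpace.single l 1)‖ ≤ spectralNorm' M := by
    have := sn_apply_le M (EuclideanSpace.single l 1)
    simpa [EuclideanSpace.norm_single] using this
  have h2 : (Matrix.toEuclideanLin M (EuclideanSpace.single l 1)) k = M k l := by
    rw [toEL_apply]
    simp [EuclideanSpace.single_apply]
  calc |M k l| = |(Matrix.toEuclideanLin M (EuclideanSpace.single l 1)) k| := by rw [h2]
    _ ≤ ‖Matrix.toEuclideanLin M (EuclideanSpace.single l 1)‖ := eucl_coord_le _ k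
    _ ≤ spectralNorm' M := h1




lemma my_le_of_sq {a b : ℝ} (ha : 0 ≤ a) (hb : 0 ≤ b) (h : a ^ 2 ≤ b ^ 2) : a ≤ b := by
  nlinarith

lemma my_eq_of_sq {a b : ℝ} (ha : 0 ≤ a) (hb : 0 ≤ b) (h : a ^ 2 = b ^ 2) : a = b :=
  le_antisymm (my_le_of_sq ha hb h.le) (my_le_of_sq hb ha h.ge)

lemma sn_transpose_le {m n : ℕ} (M : Matrix (Fin m) (Fin n) ℝ) :
    spectralNorm' Mᵀ ≤ spectralNorm' M := by
  apply sn_le_bound _ (sn_nonneg M)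
  intro u
  set w : EuclideanSpace ℝ (Fin n) := Matrix.toEuclideanLin Mᵀ u with hw
  have key : ‖w‖ ^ 2 = ⟪u, Matrix.toEuclideanLin M w⟫ := by
    rw [eucl_norm_sq, PiLp.inner_apply]
    simp only [RCLike.inner_apply, conj_trivial]
    have hwl : ∀ l, w l = ∑ k, M k l * u k := by
      intro l; rw [hw, toEL_apply]; simp [Matrix.transpose_apply]
    calc ∑ a, w a ^ 2 = ∑ l, (∑ k, M k l * u k) * w l := by
          apply Finset.sum_congr rfl; intro l _; rw [sq, hwl l]
      _ = ∑ l, ∑ k, M k l * u k * w l := by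
          apply Finset.sum_congr rfl; intro l _; rw [Finset.sum_mul]
      _ = ∑ k, ∑ l, M k l * u k * w l := Finset.sum_comm
      _ = ∑ k, u k * (∑ l, M k l * w l) := by
          apply Finset.sum_congr rfl; intro k _
          rw [Finset.mul_sum]
          apply Finset.sum_congr rfl; intro l _; ring
      _ = ∑ k, u k * (Matrix.toEuclideanLin M w) k := by
          apply Finset.sum_congr rfl; intro k _; rw [toEL_apply]
      _ = ∑ k, (Matrix.toEuclideanLin M w) k * u k :=
          Finset.sum_congr rfl fun k _ => mul_comm _ _
  have hcs : ⟪u, Matrix.toEuclideanLin M w⟫ ≤ ‖u‖ * ‖Matrix.toEuclideanLin M w‖ :=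
    real_inner_le_norm _ _
  have h2 : ‖w‖ ^ 2 ≤ ‖u‖ * (spectralNorm' M * ‖w‖) := by
    calc ‖w‖ ^ 2 ≤ ‖u‖ * ‖Matrix.toEuclideanLin M w‖ := by rw [key]; exact hcs
      _ ≤ ‖u‖ * (spectralNorm' M * ‖w‖) :=
          mul_le_mul_of_nonneg_left (sn_apply_le M w) (norm_nonneg u)
  rcases eq_or_lt_of_le (norm_nonneg w) with h0 | h0
  · rw [← h0]; exact mul_nonneg (sn_nonneg M) (norm_nonneg u)
  · have h3 : ‖w‖ * ‖w‖ ≤ (spectralNorm' M * ‖u‖) * ‖w‖ := by nlinarith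
    have := le_of_mul_le_mul_right h3 h0
    linarith

lemma sn_transpose {m n : ℕ} (M : Matrix (Fin m) (Fin n) ℝ) :
    spectralNorm' Mᵀ = spectralNorm' M := by
  refine le_antisymm (sn_transpose_le M) ?_
  have := sn_transpose_le Mᵀ
  simpa using this

lemma sn_submatrix_le {m n : ℕ} (M : Matrix (Fin m) (Fin n) ℝ) (π : Fin m ≃ Fin m)
    (ρ : Fin n ≃ Fin n) : spectralNorm' (M.submatrix π ρ) ≤ spectralNorm' M := by
  apply sn_le_bound _ (sn_nonneg M)
  intro v
  set v' : EuclideanSpace ℝ (Fin n) := WithLp.toLp 2 (fun l' => v (ρ.symm l')) with hv'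
  have happ : ∀ k, (Matrix.toEuclideanLin (M.submatrix π ρ) v) k
      = (Matrix.toEuclideanLin M v') (π k) := by
    intro k
    rw [toEL_apply, toEL_apply]
    rw [← Equiv.sum_comp ρ (fun l' => M (π k) l' * v' l')]
    apply Finset.sum_congr rfl; intro l _
    simp only [hv', PiLp.toLp_apply, Matrix.submatrix_apply]
    rw [Equiv.symm_apply_apply]
  have hnv : ‖v'‖ = ‖v‖ := by
    apply my_eq_of_sq (norm_nonneg _) (norm_nonneg _)
    rw [eucl_norm_sq, eucl_norm_sq, ← Equiv.sum_comp ρ.symm (fun l => v l ^ 2)]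
  have hsq : ‖Matrix.toEuclideanLin (M.submatrix π ρ) v‖ ^ 2
      = ‖Matrix.toEuclideanLin M v'‖ ^ 2 := by
    rw [eucl_norm_sq, eucl_norm_sq]
    rw [← Equiv.sum_comp π (fun k' => (Matrix.toEuclideanLin M v') k' ^ 2)]
    apply Finset.sum_congr rfl; intro k _
    rw [happ k]
  have := sn_apply_le M v'
  apply my_le_of_sq (norm_nonneg _) (mul_nonneg (sn_nonneg M) (norm_nonneg v))
  rw [hsq, hnv] at *
  nlinarith [norm_nonneg (Matrix.toEuclideanLin M v'), sn_nonneg M, norm_nonneg v]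

lemma sn_submatrix {m n : ℕ} (M : Matrix (Fin m) (Fin n) ℝ) (π : Fin m ≃ Fin m)
    (ρ : Fin n ≃ Fin n) : spectralNorm' (M.submatrix π ρ) = spectralNorm' M := by
  refine le_antisymm (sn_submatrix_le M π ρ) ?_
  have h := sn_submatrix_le (M.submatrix π ρ) π.symm ρ.symm
  have : (M.submatrix π ρ).submatrix π.symm ρ.symm = M := by
    ext k l; simp [Matrix.submatrix_apply]
  rwa [this] at h




lemma frob_col {m n : ℕ} (M : Matrix (Fin m) (Fin n) ℝ) :
    ∑ p : Fin m × Fin n, M p.1 p.2 ^ 2 ≤ (n : ℝ) * spectralNorm' M ^ 2 := by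
  rw [Fintype.sum_prod_type, Finset.sum_comm]
  have hcol : ∀ l : Fin n, ∑ k, M k l ^ 2 ≤ spectralNorm' M ^ 2 := by
    intro l
    have h1 : ∀ k, (Matrix.toEuclideanLin M (EuclideanSpace.single l 1)) k = M k l := by
      intro k; rw [toEL_apply]; simp [EuclideanSpace.single_apply]
    have h2 : ‖Matrix.toEuclideanLin M (EuclideanSpace.single l 1)‖ ≤ spectralNorm' M := by
      have := sn_apply_le M (EuclideanSpace.single l 1)
      simpa [EuclideanSpace.norm_single] using this
    have h3 : ∑ k, M k l ^ 2
        = ‖Matrix.toEuclideanLin M (EuclideanSpace.single l 1)‖ ^ 2 := by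
      rw [eucl_norm_sq]
      exact (Finset.sum_congr rfl fun k _ => by rw [h1 k]).symm
    rw [h3]
    have := norm_nonneg (Matrix.toEuclideanLin M (EuclideanSpace.single l 1))
    nlinarith [sn_nonneg M]
  calc ∑ l, ∑ k, M k l ^ 2 ≤ ∑ _l : Fin n, spectralNorm' M ^ 2 :=
        Finset.sum_le_sum fun l _ => hcol l
    _ = (n : ℝ) * spectralNorm' M ^ 2 := by simp [mul_comm]

lemma frob_le_min {m n : ℕ} (M : Matrix (Fin m) (Fin n) ℝ) :
    ∑ p : Fin m × Fin n, (M p.1 p.2 / spectralNorm' M) ^ 2 ≤ (min m n : ℝ) := by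
  have hfrob : ∑ p : Fin m × Fin n, M p.1 p.2 ^ 2 ≤ (min m n : ℝ) * spectralNorm' M ^ 2 := by
    rcases le_total (m : ℝ) (n : ℝ) with h | h
    · have hmn : (min m n : ℝ) = (m : ℝ) := by
        exact min_eq_left h
      rw [hmn]
      have := frob_col Mᵀ
      rw [sn_transpose] at this
      have hswap : ∑ p : Fin n × Fin m, Mᵀ p.1 p.2 ^ 2 = ∑ p : Fin m × Fin n, M p.1 p.2 ^ 2 := by
        rw [Fintype.sum_prod_type, Finset.sum_comm, Fintype.sum_prod_type]
        simp [Matrix.transpose_apply]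
      rw [hswap] at this
      exact this
    · have hmn : (min m n : ℝ) = (n : ℝ) := by
        exact min_eq_right h
      rw [hmn]
      exact frob_col M
  rcases eq_or_lt_of_le (sn_nonneg M) with h0 | h0
  · have : ∀ p : Fin m × Fin n, (M p.1 p.2 / spectralNorm' M) ^ 2 = 0 := by
      intro p; rw [← h0, div_zero]; norm_num
    rw [Finset.sum_congr rfl fun p _ => this p]
    simp
  · have heq : ∑ p : Fin m × Fin n, (M p.1 p.2 / spectralNorm' M) ^ 2
        = (∑ p : Fin m × Fin n, M p.1 p.2 ^ 2) / spectralNorm' M ^ 2 := by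
      rw [Finset.sum_div]
      exact Finset.sum_congr rfl fun p _ => by rw [div_pow]
    rw [heq, div_le_iff₀ (by positivity)]
    exact hfrob




noncomputable def snfun (m n : ℕ) (f : Fin m × Fin n → ℝ) : ℝ :=
  spectralNorm' (Matrix.of fun k l => f (k, l))

lemma snfun_continuous (m n : ℕ) : Continuous (snfun m n) := by
  let ψ : (Fin m × Fin n → ℝ) →ₗ[ℝ]
      (EuclideanSpace ℝ (Fin n) →L[ℝ] EuclideanSpace ℝ (Fin m)) :=
    { toFun := fun f => LinearMap.toContinuousLinearMap
        (Matrix.toEuclideanLin (Matrix.of fun k l => f (k, l)))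
      map_add' := by
        intro f g
        have h : (Matrix.of fun k l => (f + g) (k, l))
            = (Matrix.of fun k l => f (k, l)) + (Matrix.of fun k l => g (k, l)) := rfl
        rw [h, map_add, map_add]
      map_smul' := by
        intro c f
        have h : (Matrix.of fun k l => (c • f) (k, l))
            = c • (Matrix.of fun k l => f (k, l)) := rfl
        rw [h, _root_.map_smul, _root_.map_smul]
        rfl }
  have hψ : Continuous ψ := LinearMap.continuous_of_finiteDimensional ψ
  exact hψ.norm

noncomputable def gfun (m n : ℕ) (q : Fin m × Fin n) (f : Fin m × Fin n → ℝ) : ℝ :=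
  (f q / snfun m n f) ^ 2

lemma gfun_measurable (m n : ℕ) (q : Fin m × Fin n) : Measurable (gfun m n q) :=
  ((measurable_pi_apply q).div (snfun_continuous m n).measurable).pow_const 2

section Exchange
variable {m n : ℕ} {Ω : Type*} [MeasurableSpace Ω] (μ : Measure Ω) [IsProbabilityMeasure μ]
  (A : Ω → Matrix (Fin m) (Fin n) ℝ)

lemma joint_law
    (hmeas : ∀ p : Fin m × Fin n, Measurable (fun ω => A ω p.1 p.2))
    (hindep : iIndepFun
      (fun (p : Fin m × Fin n) ω => A ω p.1 p.2) μ) :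
    Measure.map (fun ω (p : Fin m × Fin n) => A ω p.1 p.2) μ
      = Measure.pi (fun p => Measure.map (fun ω => A ω p.1 p.2) μ) := by
  haveI : ∀ p : Fin m × Fin n, IsProbabilityMeasure (Measure.map (fun ω => A ω p.1 p.2) μ) :=
    fun p => Measure.isProbabilityMeasure_map (hmeas p).aemeasurable
  refine (Measure.pi_eq fun s hs => ?_).symm
  rw [Measure.map_apply (measurable_pi_lambda _ fun p => hmeas p) (MeasurableSet.univ_pi hs)]
  have hpre : (fun ω (p : Fin m × Fin n) => A ω p.1 p.2) ⁻¹' Set.pi Set.univ s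
      = ⋂ p ∈ Finset.univ, (fun ω => A ω p.1 p.2) ⁻¹' s p := by
    ext ω; simp [Set.mem_pi]
  rw [hpre, hindep.measure_inter_preimage_eq_mul Finset.univ (fun p _ => hs p)]
  exact Finset.prod_congr rfl fun p _ => (Measure.map_apply (hmeas p) (hs p)).symm

lemma exchange
    (hmeas : ∀ p : Fin m × Fin n, Measurable (fun ω => A ω p.1 p.2))
    (hindep : iIndepFun
      (fun (p : Fin m × Fin n) ω => A ω p.1 p.2) μ)
    (hident : ∀ p q : Fin m × Fin n,
      IdentDistrib (fun ω => A ω p.1 p.2) (fun ω => A ω q.1 q.2) μ μ)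
    (i : Fin m) (j : Fin n) (p : Fin m × Fin n) :
    ∫ ω, (A ω p.1 p.2 / spectralNorm' (A ω)) ^ 2 ∂μ
      = ∫ ω, (A ω i j / spectralNorm' (A ω)) ^ 2 ∂μ := by
  have hTm : Measurable (fun ω (q : Fin m × Fin n) => A ω q.1 q.2) :=
    measurable_pi_lambda _ fun q => hmeas q
  set T : Ω → Fin m × Fin n → ℝ := fun ω q => A ω q.1 q.2 with hT
  set ρ₀ : Measure ℝ := Measure.map (fun ω => A ω i j) μ with hρ₀
  haveI : IsProbabilityMeasure ρ₀ := Measure.isProbabilityMeasure_map (hmeas (i, j)).aemeasurable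
  have hlaw : Measure.map T μ = Measure.pi (fun _ : Fin m × Fin n => ρ₀) := by
    rw [hT, joint_law μ A hmeas hindep]
    congr 1
    funext q
    exact (hident q (i, j)).map_eq
  have hMat : ∀ ω, (Matrix.of fun k l => T ω (k, l)) = A ω := fun _ => rfl
  have hg : ∀ q : Fin m × Fin n, ∀ ω,
      gfun m n q (T ω) = (A ω q.1 q.2 / spectralNorm' (A ω)) ^ 2 := by
    intro q ω; unfold gfun snfun; rw [hMat ω]
  set π : Fin m ≃ Fin m := Equiv.swap i p.1 with hπ
  set ρ : Fin n ≃ Fin n := Equiv.swap j p.2 with hρ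
  set e : (Fin m × Fin n) ≃ (Fin m × Fin n) := π.prodCongr ρ with he
  set Φ : (Fin m × Fin n → ℝ) ≃ᵐ (Fin m × Fin n → ℝ) :=
    MeasurableEquiv.piCongrLeft (fun _ : Fin m × Fin n => ℝ) e with hΦdef
  have hΦ : ∀ (f : Fin m × Fin n → ℝ) (q : Fin m × Fin n), Φ f q = f (e.symm q) := by
    intro f q
    conv_lhs => rw [← e.apply_symm_apply q]
    exact MeasurableEquiv.piCongrLeft_apply_apply (β := fun _ : Fin m × Fin n => ℝ) e f (e.symm q)
  have hmap : Measure.map Φ (Measure.pi (fun _ : Fin m × Fin n => ρ₀))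
      = Measure.pi (fun _ : Fin m × Fin n => ρ₀) :=
    MeasureTheory.Measure.pi_map_piCongrLeft e (fun _ : Fin m × Fin n => ρ₀)
  have hcomp : ∀ f : Fin m × Fin n → ℝ, gfun m n p (Φ f) = gfun m n (i, j) f := by
    intro f
    unfold gfun
    have h1 : Φ f p = f (i, j) := by
      rw [hΦ]
      have h : e.symm p = (π.symm p.1, ρ.symm p.2) := rfl
      rw [h]
      simp [hπ, hρ, Equiv.symm_swap, Equiv.swap_apply_right]
    have h2 : snfun m n (Φ f) = snfun m n f := by
      unfold snfun
      have h : (Matrix.of fun k l => Φ f (k, l))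
          = (Matrix.of fun k l => f (k, l)).submatrix π.symm ρ.symm := by
        ext k l
        simp only [Matrix.of_apply, Matrix.submatrix_apply]
        rw [hΦ]
        rfl
      rw [h, sn_submatrix]
    rw [h1, h2]
  calc ∫ ω, (A ω p.1 p.2 / spectralNorm' (A ω)) ^ 2 ∂μ
      = ∫ ω, gfun m n p (T ω) ∂μ := by
        apply integral_congr_ae; filter_upwards with ω; rw [hg p ω]
    _ = ∫ f, gfun m n p f ∂(Measure.map T μ) :=
        (integral_map hTm.aemeasurable (gfun_measurable m n p).aestronglyMeasurable).symm
    _ = ∫ f, gfun m n p f ∂(Measure.map Φ (Measure.pi (fun _ : Fin m × Fin n => ρ₀))) := by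
        rw [hmap, hlaw]
    _ = ∫ f, gfun m n p (Φ f) ∂(Measure.pi (fun _ : Fin m × Fin n => ρ₀)) :=
        integral_map Φ.measurable.aemeasurable (gfun_measurable m n p).aestronglyMeasurable
    _ = ∫ f, gfun m n (i, j) f ∂(Measure.pi (fun _ : Fin m × Fin n => ρ₀)) := by
        apply integral_congr_ae; filter_upwards with f; rw [hcomp f]
    _ = ∫ f, gfun m n (i, j) f ∂(Measure.map T μ) := by rw [hlaw]
    _ = ∫ ω, gfun m n (i, j) (T ω) ∂μ :=
        integral_map hTm.aemeasurable (gfun_measurable m n (i, j)).aestronglyMeasurable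
    _ = ∫ ω, (A ω i j / spectralNorm' (A ω)) ^ 2 ∂μ := by
        apply integral_congr_ae; filter_upwards with ω; rw [hg (i, j) ω]

end Exchange

/-- If the entries of a random `m × n` matrix `A` are i.i.d. from a symmetric zero-mean
distribution (with `P(A = 0) = 0` so that `A / ‖A‖₂` is well defined), then for every entry,
`Var(a_{ij} / ‖A‖₂) ≤ 1 / max m n`. -/
theorem stmt3 (m n : ℕ) (hm : 0 < m) (hn : 0 < n)
    {Ω : Type*} [MeasurableSpace Ω] (μ : Measure Ω) [IsProbabilityMeasure μ]
    (A : Ω → Matrix (Fin m) (Fin n) ℝ)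
    (hmeas : ∀ p : Fin m × Fin n, Measurable (fun ω => A ω p.1 p.2))
    (hindep : iIndepFun
      (fun (p : Fin m × Fin n) ω => A ω p.1 p.2) μ)
    (hident : ∀ p q : Fin m × Fin n,
      IdentDistrib (fun ω => A ω p.1 p.2) (fun ω => A ω q.1 q.2) μ μ)
    (hsymm : ∀ p : Fin m × Fin n,
      Measure.map (fun ω => A ω p.1 p.2) μ = Measure.map (fun ω => -A ω p.1 p.2) μ)
    (hmean : ∀ p : Fin m × Fin n, ∫ ω, A ω p.1 p.2 ∂μ = 0)
    (hzero : μ {ω | A ω = 0} = 0)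
    (i : Fin m) (j : Fin n) :
    variance (fun ω => A ω i j / spectralNorm' (A ω)) μ ≤ 1 / (max m n : ℝ) := by
  have hTm : Measurable (fun ω (q : Fin m × Fin n) => A ω q.1 q.2) :=
    measurable_pi_lambda _ fun q => hmeas q
  have hsnm : Measurable (fun ω => spectralNorm' (A ω)) := by
    have h := (snfun_continuous m n).measurable.comp hTm
    have heq : (fun ω => spectralNorm' (A ω))
        = snfun m n ∘ (fun ω (q : Fin m × Fin n) => A ω q.1 q.2) := by
      funext ω
      show spectralNorm' (A ω) = snfun m n (fun q => A ω q.1 q.2)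
      unfold snfun
      congr 1
    rw [heq]
    exact h
  have hXm : ∀ q : Fin m × Fin n,
      Measurable (fun ω => (A ω q.1 q.2 / spectralNorm' (A ω)) ^ 2) :=
    fun q => ((hmeas q).div hsnm).pow_const 2
  have hbd : ∀ (q : Fin m × Fin n) ω, (A ω q.1 q.2 / spectralNorm' (A ω)) ^ 2 ≤ 1 := by
    intro q ω
    rcases eq_or_lt_of_le (sn_nonneg (A ω)) with h0 | h0
    · rw [← h0, div_zero]; norm_num
    · rw [div_pow, div_le_one (by positivity)]
      have h := entry_abs_le (A ω) q.1 q.2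
      nlinarith [abs_nonneg (A ω q.1 q.2), sq_abs (A ω q.1 q.2)]
  have hInt : ∀ q : Fin m × Fin n,
      Integrable (fun ω => (A ω q.1 q.2 / spectralNorm' (A ω)) ^ 2) μ := by
    intro q
    apply Integrable.mono' (integrable_const (1 : ℝ)) (hXm q).aestronglyMeasurable
    filter_upwards with ω
    rw [Real.norm_eq_abs, abs_of_nonneg (sq_nonneg _)]
    exact hbd q ω
  set I := ∫ ω, (A ω i j / spectralNorm' (A ω)) ^ 2 ∂μ with hI
  have hvar : variance (fun ω => A ω i j / spectralNorm' (A ω)) μ ≤ I := by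
    have h := variance_le_expectation_sq
      (μ := μ) (X := fun ω => A ω i j / spectralNorm' (A ω))
      ((hmeas (i, j)).div hsnm).aestronglyMeasurable
    refine h.trans_eq ?_
    simp only [hI, Pi.pow_apply]
  have hsum : ((m : ℝ) * n) * I ≤ (min (m : ℝ) (n : ℝ)) := by
    have h1 : ∑ q : Fin m × Fin n, ∫ ω, (A ω q.1 q.2 / spectralNorm' (A ω)) ^ 2 ∂μ
        = ((m : ℝ) * n) * I := by
      rw [Finset.sum_congr rfl fun q _ => exchange μ A hmeas hindep hident i j q]
      rw [Finset.sum_const, Finset.card_univ]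
      simp [nsmul_eq_mul, mul_comm]
      exact Or.inl hI.symm
    have h2 : ∑ q : Fin m × Fin n, ∫ ω, (A ω q.1 q.2 / spectralNorm' (A ω)) ^ 2 ∂μ
        = ∫ ω, ∑ q : Fin m × Fin n, (A ω q.1 q.2 / spectralNorm' (A ω)) ^ 2 ∂μ :=
      (integral_finset_sum Finset.univ fun q _ => hInt q).symm
    have h3 : ∫ ω, ∑ q : Fin m × Fin n, (A ω q.1 q.2 / spectralNorm' (A ω)) ^ 2 ∂μ
        ≤ (min (m : ℝ) (n : ℝ)) := by
      have := integral_mono (μ := μ)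
        (integrable_finset_sum Finset.univ fun q _ => hInt q)
        (integrable_const _) (fun ω => frob_le_min (A ω))
      simpa using this
    rw [← h1, h2]; exact h3
  have hm' : (0 : ℝ) < m := by exact_mod_cast hm
  have hn' : (0 : ℝ) < n := by exact_mod_cast hn
  have hminmax : min (m : ℝ) (n : ℝ) * max (m : ℝ) (n : ℝ) = (m : ℝ) * n := by
    rcases le_total (m : ℝ) (n : ℝ) with h | h
    · rw [min_eq_left h, max_eq_right h]
    · rw [min_eq_right h, max_eq_left h]; ring
  have hmaxpos : (0 : ℝ) < max (m : ℝ) (n : ℝ) := lt_max_of_lt_left hm'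
  have hfin : I ≤ 1 / (max m n : ℝ) := by
    rw [le_div_iff₀ hmaxpos]
    nlinarith [mul_le_mul_of_nonneg_right hsum hmaxpos.le, mul_pos hm' hn', hminmax]
  exact hvar.trans hfin
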